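/- Let f = [f₀, f₁, 0, 0] be a symmetric ternary function in 𝓜 (so f depends only on Hamming weight and vanishes on weights 2 and 3). If U = [[a,b],[0,d]] is an invertible upper triangular 2×2 complex matrix, then the holographic transform U∘f (given by applying U⊗U⊗U to the value vector of f) again lies in 𝓜. Conversely, if f₁ ≠ 0 and M is an invertible 2×2 matrix with M∘f ∈ 𝓜, then M is upper triangular. -/

import Mathlib

/-- Hamming weight of a Boolean tuple. -/
def wt {n : ℕ} (x : Fin n → Bool) : ℕ := (Finset.univ.filter (fun i => x i = true)).card

/-- `f` is a generalised matching function: it vanishes on inputs of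
Hamming weight greater than 1. -/
def InM {n : ℕ} (f : (Fin n → Bool) → ℂ) : Prop :=
  ∀ x : Fin n → Bool, 1 < wt x → f x = 0

/-- Holographic transformation of an `n`-ary function by a 2×2 matrix `M`
(rows/columns indexed by `Bool`, with `false = 0`, `true = 1`). -/
noncomputable def htrans {n : ℕ} (M : Bool → Bool → ℂ) (f : (Fin n → Bool) → ℂ) :
    (Fin n → Bool) → ℂ :=
  fun x => ∑ z : Fin n → Bool, f z * ∏ j, M (x j) (z j)

/-- Auxiliary equivalence enumerating `Fin 3 → Bool`. -/
def e3 : Bool × Bool × Bool ≃ (Fin 3 → Bool) where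
  toFun p := ![p.1, p.2.1, p.2.2]
  invFun x := (x 0, x 1, x 2)
  left_inv := by decide
  right_inv := by decide

lemma sum3 (g : (Fin 3 → Bool) → ℂ) : ∑ z, g z =
    g ![false,false,false] + g ![true,false,false] + g ![false,true,false] + g ![false,false,true]
    + g ![true,true,false] + g ![true,false,true] + g ![false,true,true] + g ![true,true,true] := by
  rw [← Equiv.sum_comp e3]
  simp only [Fintype.sum_prod_type, Fintype.sum_bool, e3, Equiv.coe_fn_mk]
  ring

lemma ht_eval (f₀ f₁ : ℂ) (f : (Fin 3 → Bool) → ℂ)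
    (hf : ∀ x, f x = if wt x = 0 then f₀ else if wt x = 1 then f₁ else 0)
    (M : Bool → Bool → ℂ) (x : Fin 3 → Bool) :
    htrans M f x = f₀ * (M (x 0) false * M (x 1) false * M (x 2) false)
      + f₁ * (M (x 0) true * M (x 1) false * M (x 2) false
            + M (x 0) false * M (x 1) true * M (x 2) false
            + M (x 0) false * M (x 1) false * M (x 2) true) := by
  simp only [htrans, sum3, hf,
    show wt ![false,false,false] = 0 from by decide,
    show wt ![true,false,false] = 1 from by decide,
    show wt ![false,true,false] = 1 from by decide,
    show wt ![false,false,true] = 1 from by decide,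
    show wt ![true,true,false] = 2 from by decide,
    show wt ![true,false,true] = 2 from by decide,
    show wt ![false,true,true] = 2 from by decide,
    show wt ![true,true,true] = 3 from by decide,
    Fin.prod_univ_three]
  norm_num
  simp only [Matrix.cons_val_two, Matrix.tail_cons, Matrix.head_cons]
  ring

/-- Let `f = [f₀,f₁,0,0]` be a symmetric ternary function in `𝓜`.
(1) If `U = [[a,b],[0,d]]` is invertible upper triangular, then `U∘f ∈ 𝓜`.
(2) Conversely, if `f₁ ≠ 0`, `M` is invertible and `M∘f ∈ 𝓜`, then `M` is
upper triangular. -/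
theorem M_triangular (f₀ f₁ : ℂ) (f : (Fin 3 → Bool) → ℂ)
    (hf : ∀ x, f x = if wt x = 0 then f₀ else if wt x = 1 then f₁ else 0) :
    (∀ U : Bool → Bool → ℂ, U true false = 0 → U false false * U true true ≠ 0 →
      InM (htrans U f)) ∧
    (f₁ ≠ 0 → ∀ M : Bool → Bool → ℂ,
      M false false * M true true - M false true * M true false ≠ 0 →
      InM (htrans M f) → M true false = 0) := by
  constructor
  · intro U h0 _ x hx
    obtain ⟨b0, b1, b2, rfl⟩ : ∃ b0 b1 b2, x = ![b0, b1, b2] :=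
      ⟨x 0, x 1, x 2, by funext i; fin_cases i <;> rfl⟩
    rw [ht_eval f₀ f₁ f hf]
    cases b0 <;> cases b1 <;> cases b2 <;>
      first
        | exact absurd hx (by decide)
        | simp [h0]
  · intro hf1 M hdet hM
    have E1 := hM ![true, true, false] (by decide)
    have E4 := hM ![true, true, true] (by decide)
    rw [ht_eval f₀ f₁ f hf] at E1 E4
    simp only [Matrix.cons_val_zero, Matrix.cons_val_one, Matrix.head_cons,
      Matrix.cons_val_two, Matrix.tail_cons] at E1 E4
    have key : (f₁ * (M true false * M true false)) *
        (M false false * M true true - M false true * M true false) = 0 := by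
      linear_combination (M false false) * E4 - (M true false) * E1
    rcases mul_eq_zero.mp key with h | h
    · rcases mul_eq_zero.mp h with h' | h'
      · exact absurd h' hf1
      · exact mul_self_eq_zero.mp h'
    · exact absurd h hdet
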